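/- In a right-angled Coxeter system, the centralizer of a standard generator r in W is exactly the special (standard parabolic) subgroup generated by the set C(r) of generators commuting with r. -/

import Mathlib

open List CoxeterSystem

namespace RAC

open scoped Classical

variable {B W : Type*} [Group W] {M : CoxeterMatrix B} (cs : CoxeterSystem M W)

local prefix:100 "ℓ" => cs.length
local prefix:100 "π" => cs.wordProd
local prefix:100 "ris" => cs.rightInvSeq

theorem conj_simple_eq_iff (i : B) (t u : W) :
    cs.simple i * t * cs.simple i = u ↔ t = cs.simple i * u * cs.simple i := by
  constructor
  · rintro rfl
    simp [mul_assoc, cs.simple_mul_simple_cancel_left, cs.simple_mul_simple_self]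
  · rintro rfl
    simp [mul_assoc, cs.simple_mul_simple_cancel_left, cs.simple_mul_simple_self]

/-- The underlying function of the sign permutation of `W × ℤˣ`. -/
noncomputable def sigFun (i : B) : W × ℤˣ → W × ℤˣ :=
  fun p => (cs.simple i * p.1 * cs.simple i, if p.1 = cs.simple i then -p.2 else p.2)

theorem sigFun_invol (i : B) : Function.Involutive (sigFun cs i) := by
  rintro ⟨t, e⟩
  unfold sigFun
  have h2 : (cs.simple i * t * cs.simple i = cs.simple i) ↔ t = cs.simple i := by
    rw [conj_simple_eq_iff]
    simp [cs.simple_mul_simple_cancel_left]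
  have h1 : cs.simple i * (cs.simple i * t * cs.simple i) * cs.simple i = t := by
    simp [mul_assoc, cs.simple_mul_simple_cancel_left, cs.simple_mul_simple_self]
  refine Prod.ext h1 ?_
  by_cases ht : t = cs.simple i
  · show (if cs.simple i * t * cs.simple i = cs.simple i
        then -(if t = cs.simple i then -e else e) else (if t = cs.simple i then -e else e)) = e
    rw [if_pos ht, if_pos (h2.mpr ht), neg_neg]
  · show (if cs.simple i * t * cs.simple i = cs.simple i
        then -(if t = cs.simple i then -e else e) else (if t = cs.simple i then -e else e)) = e
    rw [if_neg ht, if_neg (fun h => ht (h2.mp h))]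

/-- The sign permutation of `W × ℤˣ` associated to a simple generator. -/
noncomputable def sig (i : B) : Equiv.Perm (W × ℤˣ) :=
  (sigFun_invol cs i).toPerm

theorem sig_apply (i : B) (p : W × ℤˣ) : sig cs i p = sigFun cs i p := rfl

theorem sig_sq (i : B) : sig cs i * sig cs i = 1 := by
  apply Equiv.ext
  intro p
  exact sigFun_invol cs i p

theorem sig_comm {i j : B} (hc : cs.simple i * cs.simple j = cs.simple j * cs.simple i) :
    sig cs i * sig cs j = sig cs j * sig cs i := by
  have h1 : cs.simple j * cs.simple i * cs.simple j = cs.simple i := by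
    rw [mul_assoc, hc, ← mul_assoc]
    simp [cs.simple_mul_simple_self]
  have h2 : cs.simple i * cs.simple j * cs.simple i = cs.simple j := by
    rw [mul_assoc, ← hc, ← mul_assoc]
    simp [cs.simple_mul_simple_self]
  apply Equiv.ext
  rintro ⟨t, e⟩
  have e1 : (cs.simple j * t * cs.simple j = cs.simple i) ↔ t = cs.simple i := by
    rw [conj_simple_eq_iff]
    rw [show cs.simple j * cs.simple i * cs.simple j = cs.simple i from h1]
  have e2 : (cs.simple i * t * cs.simple i = cs.simple j) ↔ t = cs.simple j := by
    rw [conj_simple_eq_iff]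
    rw [show cs.simple i * cs.simple j * cs.simple i = cs.simple j from h2]
  show sig cs i (sig cs j (t, e)) = sig cs j (sig cs i (t, e))
  simp only [sig_apply, sigFun]
  refine Prod.ext ?_ ?_
  · show cs.simple i * (cs.simple j * t * cs.simple j) * cs.simple i
        = cs.simple j * (cs.simple i * t * cs.simple i) * cs.simple j
    calc cs.simple i * (cs.simple j * t * cs.simple j) * cs.simple i
        = cs.simple i * cs.simple j * t * (cs.simple j * cs.simple i) := by
          simp only [mul_assoc]
      _ = cs.simple j * cs.simple i * t * (cs.simple i * cs.simple j) := by rw [hc, ← hc]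
      _ = cs.simple j * (cs.simple i * t * cs.simple i) * cs.simple j := by
          simp only [mul_assoc]
  · by_cases hti : t = cs.simple i <;> by_cases htj : t = cs.simple j
    · rw [if_pos htj, if_pos hti, if_pos (e1.mpr hti), if_pos (e2.mpr htj)]
    · rw [if_neg htj, if_pos hti, if_pos (e1.mpr hti), if_neg (fun h => htj (e2.mp h))]
    · rw [if_pos htj, if_neg hti, if_neg (fun h => hti (e1.mp h)), if_pos (e2.mpr htj)]
    · rw [if_neg htj, if_neg hti, if_neg (fun h => hti (e1.mp h)),
        if_neg (fun h => htj (e2.mp h))]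

theorem conj_eq_iff' (a t u : W) : a * t * a⁻¹ = u ↔ t = a⁻¹ * u * a := by
  constructor
  · rintro rfl; group
  · rintro rfl; group

theorem comm_of_M_eq_two {i j : B} (h : M i j = 2) :
    cs.simple i * cs.simple j = cs.simple j * cs.simple i := by
  have h1 : (cs.simple i * cs.simple j) * (cs.simple i * cs.simple j) = 1 := by
    have := cs.simple_mul_simple_pow i j
    rwa [h, pow_two] at this
  have h2 : cs.simple i * cs.simple j = (cs.simple i * cs.simple j)⁻¹ :=
    eq_inv_of_mul_eq_one_left h1
  rw [h2, mul_inv_rev, cs.inv_simple, cs.inv_simple]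

theorem sig_liftable (hra : ∀ i j : B, i ≠ j → M i j = 2 ∨ M i j = 0) :
    M.IsLiftable (sig cs) := by
  intro i j
  by_cases hij : i = j
  · subst hij
    rw [M.diagonal i, pow_one]
    exact sig_sq cs i
  · rcases hra i j hij with h2 | h0
    · rw [h2]
      have hc := comm_of_M_eq_two cs h2
      calc (sig cs i * sig cs j) ^ 2
          = sig cs i * (sig cs j * sig cs i) * sig cs j := by
            rw [pow_two]; simp only [mul_assoc]
        _ = sig cs i * (sig cs i * sig cs j) * sig cs j := by rw [← sig_comm cs hc]
        _ = 1 := by simp only [mul_assoc, sig_sq, mul_one]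
    · rw [h0, pow_zero]

/-- The sign representation of `W`. -/
noncomputable def rho (hra : ∀ i j : B, i ≠ j → M i j = 2 ∨ M i j = 0) :
    W →* Equiv.Perm (W × ℤˣ) :=
  cs.lift ⟨sig cs, sig_liftable cs hra⟩

theorem rho_simple (hra : ∀ i j : B, i ≠ j → M i j = 2 ∨ M i j = 0) (i : B) :
    rho cs hra (cs.simple i) = sig cs i :=
  cs.lift_apply_simple (sig_liftable cs hra) i

/-- Sign of `t` in a list of group elements. -/
noncomputable def sgn (t : W) (l : List W) : ℤˣ :=
  (l.map (fun u => if u = t then (-1 : ℤˣ) else 1)).prod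

theorem sgn_nil (t : W) : sgn t [] = 1 := rfl

theorem sgn_cons (t x : W) (l : List W) :
    sgn t (x :: l) = (if x = t then (-1 : ℤˣ) else 1) * sgn t l := by
  simp [sgn]

theorem sgn_of_not_mem {t : W} {l : List W} (h : t ∉ l) : sgn t l = 1 := by
  induction l with
  | nil => rfl
  | cons x l ih =>
    rw [sgn_cons, if_neg (by rintro rfl; exact h (List.mem_cons_self)),
      ih (fun hm => h (List.mem_cons_of_mem x hm)), one_mul]

theorem sgn_of_mem_nodup {t : W} {l : List W} (hnd : l.Nodup) (h : t ∈ l) : sgn t l = -1 := by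
  induction l with
  | nil => exact absurd h (List.not_mem_nil)
  | cons x l ih =>
    rw [sgn_cons]
    rcases List.mem_cons.mp h with rfl | hm
    · rw [if_pos rfl, sgn_of_not_mem (List.nodup_cons.mp hnd).1, mul_one]
    · rw [if_neg, ih (List.nodup_cons.mp hnd).2 hm, one_mul]
      rintro rfl
      exact (List.nodup_cons.mp hnd).1 hm

theorem rho_wordProd (hra : ∀ i j : B, i ≠ j → M i j = 2 ∨ M i j = 0)
    (ω : List B) (t : W) (e : ℤˣ) :
    rho cs hra (π ω) (t, e) = (π ω * t * (π ω)⁻¹, e * sgn t (ris ω)) := by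
  induction ω generalizing t e with
  | nil => simp [sgn_nil]
  | cons i ω ih =>
    rw [cs.wordProd_cons, map_mul, Equiv.Perm.mul_apply, ih, rho_simple]
    have hris : ris (i :: ω) = ((π ω)⁻¹ * cs.simple i * π ω) :: ris ω := rfl
    rw [sig_apply]
    unfold sigFun
    refine Prod.ext ?_ ?_
    · show cs.simple i * (π ω * t * (π ω)⁻¹) * cs.simple i
          = (cs.simple i * π ω) * t * (cs.simple i * π ω)⁻¹
      rw [mul_inv_rev, cs.inv_simple]
      simp only [mul_assoc]
    · show (if π ω * t * (π ω)⁻¹ = cs.simple i then -(e * sgn t (ris ω))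
          else e * sgn t (ris ω)) = e * sgn t (ris (i :: ω))
      rw [hris, sgn_cons]
      have hcond : (π ω * t * (π ω)⁻¹ = cs.simple i)
          ↔ ((π ω)⁻¹ * cs.simple i * π ω = t) := by
        rw [conj_eq_iff', eq_comm]
      by_cases hc : (π ω)⁻¹ * cs.simple i * π ω = t
      · rw [if_pos (hcond.mpr hc), if_pos hc]
        simp [mul_comm, mul_left_comm]
      · rw [if_neg (fun h => hc (hcond.mp h)), if_neg hc, one_mul]

theorem mem_ris_of_descent (hra : ∀ i j : B, i ≠ j → M i j = 2 ∨ M i j = 0)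
    {w : W} {x : B} (hd : ℓ (w * cs.simple x) < ℓ w)
    {ω : List B} (hω : cs.IsReduced ω) (hπ : w = π ω) : cs.simple x ∈ ris ω := by
  by_contra hnot
  obtain ⟨ω', hω', hπ'⟩ := cs.exists_reduced_word' (w * cs.simple x)
  have key : rho cs hra (w * cs.simple x) (cs.simple x, 1)
      = ((w * cs.simple x) * cs.simple x * (w * cs.simple x)⁻¹, sgn (cs.simple x) (ris ω')) := by
    rw [hπ', rho_wordProd, one_mul]
  have key2 : rho cs hra (w * cs.simple x) (cs.simple x, 1)
      = (w * cs.simple x * w⁻¹, -sgn (cs.simple x) (ris ω)) := by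
    rw [map_mul, Equiv.Perm.mul_apply, rho_simple, sig_apply]
    show rho cs hra w (cs.simple x * cs.simple x * cs.simple x,
        if cs.simple x = cs.simple x then -(1 : ℤˣ) else 1) = _
    rw [if_pos rfl, cs.simple_mul_simple_self, one_mul, hπ, rho_wordProd, ← hπ]
    refine Prod.ext rfl ?_
    show -1 * sgn (cs.simple x) (ris ω) = -sgn (cs.simple x) (ris ω)
    simp
  rw [key2] at key
  have hsgn : sgn (cs.simple x) (ris ω') = -1 := by
    have := congrArg Prod.snd key
    simp only at this
    rw [← this, sgn_of_not_mem hnot]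
  have hmem : cs.simple x ∈ ris ω' := by
    by_contra hn
    rw [sgn_of_not_mem hn] at hsgn
    exact absurd hsgn (by decide)
  have hinv := cs.isRightInversion_of_mem_rightInvSeq hω' hmem
  rw [← hπ'] at hinv
  have : ℓ (w * cs.simple x * cs.simple x) < ℓ (w * cs.simple x) := hinv.2
  rw [cs.simple_mul_simple_cancel_right] at this
  exact absurd hd (by omega)

theorem exchange (hra : ∀ i j : B, i ≠ j → M i j = 2 ∨ M i j = 0)
    {w : W} {x : B} (hd : ℓ (w * cs.simple x) < ℓ w)
    {ω : List B} (hω : cs.IsReduced ω) (hπ : w = π ω) :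
    ∃ k, k < ω.length ∧ w * cs.simple x = π (ω.eraseIdx k) := by
  have hmem := mem_ris_of_descent cs hra hd hω hπ
  obtain ⟨k, hk, heq⟩ := List.mem_iff_getElem.mp hmem
  rw [cs.length_rightInvSeq] at hk
  refine ⟨k, hk, ?_⟩
  have := cs.wordProd_mul_getD_rightInvSeq ω k
  rw [List.getD_eq_getElem _ 1 (by rw [cs.length_rightInvSeq]; exact hk), heq] at this
  rw [hπ, this]

/-- The permutation `x ↦ -x` of `ℤ`. -/
def aPerm : Equiv.Perm ℤ := Equiv.neg ℤ

theorem aPerm_apply (z : ℤ) : aPerm z = -z := rfl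

/-- The permutation `x ↦ 1 - x` of `ℤ`. -/
def bPerm : Equiv.Perm ℤ :=
  Function.Involutive.toPerm (fun x => 1 - x) (fun x => by ring)

theorem bPerm_apply (z : ℤ) : bPerm z = 1 - z := rfl

/-- Map sending `i` to `bPerm`, `j` to `aPerm`, everything else to `1`. -/
noncomputable def pairFun (i j : B) : B → Equiv.Perm ℤ :=
  fun k => if k = i then bPerm else if k = j then aPerm else 1

theorem pairFun_invol (i j k : B) : pairFun i j k * pairFun i j k = 1 := by
  unfold pairFun
  split_ifs
  · apply Equiv.ext; intro z
    show bPerm (bPerm z) = z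
    rw [bPerm_apply, bPerm_apply]; ring
  · apply Equiv.ext; intro z
    show aPerm (aPerm z) = z
    rw [aPerm_apply, aPerm_apply]; ring
  · rw [one_mul]

theorem pairFun_liftable {i j : B} (hij : i ≠ j) (h0 : M i j = 0)
    (hra : ∀ i j : B, i ≠ j → M i j = 2 ∨ M i j = 0) :
    M.IsLiftable (pairFun i j) := by
  intro k l
  by_cases hkl : k = l
  · subst hkl
    rw [M.diagonal k, pow_one]
    exact pairFun_invol i j k
  · rcases hra k l hkl with h2 | hz
    · have hone : pairFun i j k = 1 ∨ pairFun i j l = 1 := by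
        by_cases hki : k = i
        · right
          have hlj : l ≠ j := by
            rintro rfl
            rw [hki] at h2
            rw [h2] at h0
            exact absurd h0 (by norm_num)
          have hli : l ≠ i := fun h => hkl (hki.trans h.symm)
          unfold pairFun
          rw [if_neg hli, if_neg hlj]
        · by_cases hkj : k = j
          · right
            have hli : l ≠ i := by
              rintro rfl
              rw [hkj] at h2
              rw [M.symmetric j l] at h2
              rw [h2] at h0
              exact absurd h0 (by norm_num)
            have hlj : l ≠ j := fun h => hkl (hkj.trans h.symm)
            unfold pairFun
            rw [if_neg hli, if_neg hlj]
          · left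
            unfold pairFun
            rw [if_neg hki, if_neg hkj]
      rw [h2]
      rcases hone with h | h
      · rw [h, one_mul, pow_two]
        exact pairFun_invol i j l
      · rw [h, mul_one, pow_two]
        exact pairFun_invol i j k
    · rw [hz, pow_zero]

/-- The affine representation associated to a pair of generators. -/
noncomputable def psi {i j : B} (hij : i ≠ j) (h0 : M i j = 0)
    (hra : ∀ i j : B, i ≠ j → M i j = 2 ∨ M i j = 0) : W →* Equiv.Perm ℤ :=
  cs.lift ⟨pairFun i j, pairFun_liftable hij h0 hra⟩

theorem psi_simple {i j : B} (hij : i ≠ j) (h0 : M i j = 0)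
    (hra : ∀ i j : B, i ≠ j → M i j = 2 ∨ M i j = 0) (k : B) :
    psi cs hij h0 hra (cs.simple k) = pairFun i j k :=
  cs.lift_apply_simple _ k

theorem psi_bound {i j : B} (hij : i ≠ j) (h0 : M i j = 0)
    (hra : ∀ i j : B, i ≠ j → M i j = 2 ∨ M i j = 0) :
    ∀ ω : List B, (∀ x ∈ ω, x = i ∨ x = j) →
    ∃ (ε : ℤˣ) (c : ℤ), (∀ z : ℤ, psi cs hij h0 hra (π ω) z = (ε : ℤ) * z + c) ∧
      -(ω.length : ℤ) ≤ 2 * c ∧ 2 * c ≤ (ω.length : ℤ) + 1 := by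
  intro ω
  induction ω with
  | nil =>
    intro _
    exact ⟨1, 0, fun z => by simp, by simp, by simp⟩
  | cons x ω ih =>
    intro hmem
    obtain ⟨ε, c, hval, hb1, hb2⟩ := ih (fun y hy => hmem y (List.mem_cons_of_mem x hy))
    have happ : ∀ z : ℤ, psi cs hij h0 hra (π (x :: ω)) z
        = pairFun i j x (psi cs hij h0 hra (π ω) z) := by
      intro z
      rw [cs.wordProd_cons, map_mul, ← psi_simple cs hij h0 hra x]
      rfl
    rcases hmem x (List.mem_cons_self) with rfl | rfl
    · -- x = i, bPerm
      refine ⟨-ε, 1 - c, ?_, ?_, ?_⟩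
      · intro z
        rw [happ z, hval z]
        unfold pairFun
        rw [if_pos rfl, bPerm_apply]
        push_cast
        ring
      · simp only [List.length_cons]; push_cast; omega
      · simp only [List.length_cons]; push_cast; omega
    · -- x = j, aPerm
      refine ⟨-ε, -c, ?_, ?_, ?_⟩
      · intro z
        rw [happ z, hval z]
        unfold pairFun
        rw [if_neg (fun h => hij h.symm), if_pos rfl, aPerm_apply]
        push_cast
        ring
      · simp only [List.length_cons]; push_cast; omega
      · simp only [List.length_cons]; push_cast; omega

theorem psi_chain_val {i j : B} (hij : i ≠ j) (h0 : M i j = 0)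
    (hra : ∀ i j : B, i ≠ j → M i j = 2 ∨ M i j = 0) :
    ∀ ω : List B, (∀ x ∈ ω, x = i ∨ x = j) → List.Chain' (· ≠ ·) ω →
      (ω.head? = some i → psi cs hij h0 hra (π ω) 0 = ((ω.length + 1) / 2 : ℕ)) ∧
      (ω.head? = some j → psi cs hij h0 hra (π ω) 0 = -((ω.length / 2 : ℕ) : ℤ)) := by
  intro ω
  induction ω with
  | nil => exact fun _ _ => ⟨fun h => by simp at h, fun h => by simp at h⟩
  | cons x ω ih =>
    intro hmem hch
    have hmem' : ∀ y ∈ ω, y = i ∨ y = j := fun y hy => hmem y (List.mem_cons_of_mem x hy)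
    have hch' : List.Chain' (· ≠ ·) ω := (List.isChain_cons.mp hch).2
    have happ : psi cs hij h0 hra (π (x :: ω)) 0
        = pairFun i j x (psi cs hij h0 hra (π ω) 0) := by
      rw [cs.wordProd_cons, map_mul, ← psi_simple cs hij h0 hra x]
      rfl
    constructor
    · intro hh
      have hx : x = i := by simpa using hh
      subst hx
      rw [happ]
      unfold pairFun
      rw [if_pos rfl, bPerm_apply]
      cases ω with
      | nil =>
        simp
      | cons y ω' =>
        have hxy : x ≠ y := (List.isChain_cons_cons.mp hch).1
        have hy : y = j := by
          rcases hmem' y (List.mem_cons_self) with rfl | rfl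
          · exact absurd rfl hxy
          · rfl
        have := (ih hmem' hch').2 (by simp [hy])
        rw [this]
        simp only [List.length_cons]
        have harith : (ω'.length + 1 + 1 + 1) / 2 = (ω'.length + 1) / 2 + 1 := by omega
        rw [harith]
        push_cast
        ring
    · intro hh
      have hx : x = j := by simpa using hh
      subst hx
      rw [happ]
      unfold pairFun
      rw [if_neg (fun h => hij h.symm), if_pos rfl, aPerm_apply]
      cases ω with
      | nil =>
        simp
      | cons y ω' =>
        have hxy : x ≠ y := (List.isChain_cons_cons.mp hch).1
        have hy : y = i := by
          rcases hmem' y (List.mem_cons_self) with rfl | rfl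
          · rfl
          · exact absurd rfl hxy
        have := (ih hmem' hch').1 (by simp [hy])
        rw [this]
        simp only [List.length_cons]

/-- Reduce a word by cancelling adjacent equal letters, producing a word with
no two adjacent letters equal. -/
noncomputable def reduceWord : List B → List B
  | [] => []
  | x :: xs =>
    match reduceWord xs with
    | [] => [x]
    | y :: ys => if x = y then ys else x :: y :: ys

theorem reduceWord_chain : ∀ ω : List B, List.Chain' (· ≠ ·) (reduceWord ω) := by
  intro ω
  induction ω with
  | nil => simp [reduceWord, List.Chain']
  | cons x xs ih =>
    rcases h : reduceWord xs with _ | ⟨y, ys⟩ <;> simp only [reduceWord, h]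
    · simp [List.Chain']
    · rw [h] at ih
      by_cases hxy : x = y
      · rw [if_pos hxy]
        exact (List.isChain_cons.mp ih).2
      · rw [if_neg hxy]
        exact List.isChain_cons_cons.mpr ⟨hxy, ih⟩

theorem reduceWord_subset : ∀ ω : List B, ∀ z ∈ reduceWord ω, z ∈ ω := by
  intro ω
  induction ω with
  | nil => simp [reduceWord]
  | cons x xs ih =>
    intro z hz
    rcases h : reduceWord xs with _ | ⟨y, ys⟩ <;> simp only [reduceWord, h] at hz
    · simp at hz
      simp [hz]
    · rw [h] at ih
      by_cases hxy : x = y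
      · rw [if_pos hxy] at hz
        exact List.mem_cons_of_mem x (ih z (List.mem_cons_of_mem y hz))
      · rw [if_neg hxy] at hz
        rcases List.mem_cons.mp hz with rfl | hz'
        · exact List.mem_cons_self
        · exact List.mem_cons_of_mem x (ih z hz')

theorem reduceWord_prod : ∀ ω : List B, π (reduceWord ω) = π ω := by
  intro ω
  induction ω with
  | nil => simp [reduceWord]
  | cons x xs ih =>
    rcases h : reduceWord xs with _ | ⟨y, ys⟩ <;> simp only [reduceWord, h]
    · rw [h] at ih
      rw [cs.wordProd_singleton, cs.wordProd_cons, ← ih, cs.wordProd_nil, mul_one]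
    · rw [h] at ih
      by_cases hxy : x = y
      · rw [if_pos hxy, cs.wordProd_cons, ← ih, cs.wordProd_cons, hxy,
          cs.simple_mul_simple_cancel_left]
      · rw [if_neg hxy, cs.wordProd_cons x (y :: ys), ih, ← cs.wordProd_cons x xs]

/-- The key length formula: if `v` has minimal length in its coset with respect to words
in `i`, `j`, and `M i j = 0`, then multiplying by a product of an alternating word adds
lengths. -/
theorem chain_length (hra : ∀ i j : B, i ≠ j → M i j = 2 ∨ M i j = 0)
    {i j : B} (hij : i ≠ j) (h0 : M i j = 0) {v : W}
    (hmin : ∀ ω : List B, (∀ x ∈ ω, x = i ∨ x = j) → ℓ v ≤ ℓ (v * π ω)) :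
    ∀ (a : List B), (∀ x ∈ a, x = i ∨ x = j) → List.Chain' (· ≠ ·) a →
      ℓ (v * π a) = ℓ v + a.length := by
  intro a
  induction a using List.reverseRecOn with
  | nil => simp [cs.wordProd_nil]
  | append_singleton a' x ih =>
    intro hmem hch
    have hmem' : ∀ y ∈ a', y = i ∨ y = j :=
      fun y hy => hmem y (List.mem_append_left _ hy)
    have hch' : List.Chain' (· ≠ ·) a' := hch.left_of_append
    have IH : ℓ (v * π a') = ℓ v + a'.length := ih hmem' hch'
    have hprod : v * π (a' ++ [x]) = (v * π a') * cs.simple x := by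
      rw [cs.wordProd_append, cs.wordProd_singleton, mul_assoc]
    rcases cs.length_mul_simple (v * π a') x with hplus | hminus
    · rw [hprod, hplus, IH, List.length_append]
      simp only [List.length_singleton]
      omega
    · -- descent case: derive a contradiction
      exfalso
      have hlt : ℓ ((v * π a') * cs.simple x) < ℓ (v * π a') := by omega
      obtain ⟨ωv, hωv, hπv⟩ := cs.exists_reduced_word' v
      have hΩπ : v * π a' = π (ωv ++ a') := by
        rw [cs.wordProd_append, ← hπv]
      have hΩred : cs.IsReduced (ωv ++ a') := by
        unfold CoxeterSystem.IsReduced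
        rw [← hΩπ, IH, List.length_append]
        rw [CoxeterSystem.IsReduced] at hωv
        rw [← hπv] at hωv
        omega
      obtain ⟨k, hk, heq⟩ := exchange cs hra hlt hΩred hΩπ
      by_cases hkv : k < ωv.length
      · -- erased in the `v` part: contradicts minimality
        rw [List.eraseIdx_append_of_lt_length hkv, cs.wordProd_append] at heq
        have hω₁ : v * π ((a' ++ [x]) ++ a'.reverse) = π (ωv.eraseIdx k) := by
          rw [cs.wordProd_append, cs.wordProd_append, cs.wordProd_singleton,
            cs.wordProd_reverse]
          simp only [← mul_assoc]
          rw [heq, mul_inv_cancel_right]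
        have hmem₁ : ∀ y ∈ (a' ++ [x]) ++ a'.reverse, y = i ∨ y = j := by
          intro y hy
          rcases List.mem_append.mp hy with hy' | hy'
          · exact hmem y hy'
          · exact hmem' y (List.mem_reverse.mp hy')
        have h1 := hmin _ hmem₁
        rw [hω₁] at h1
        have h2 := cs.length_wordProd_le (ωv.eraseIdx k)
        have h3 : (ωv.eraseIdx k).length + 1 = ωv.length :=
          List.length_eraseIdx_add_one hkv
        have h4 : ℓ v = ωv.length := by
          rw [CoxeterSystem.IsReduced] at hωv
          rw [← hπv] at hωv
          exact hωv
        omega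
      · -- erased in the `a'` part: contradicts the affine representation bound
        push_neg at hkv
        rw [List.eraseIdx_append_of_length_le hkv] at heq
        set k' := k - ωv.length with hk'
        have hk'lt : k' < a'.length := by
          rw [List.length_append] at hk
          omega
        have hcancel : π (a' ++ [x]) = π (a'.eraseIdx k') := by
          have : v * π (a' ++ [x]) = v * π (a'.eraseIdx k') := by
            rw [hprod, heq, cs.wordProd_append, ← hπv]
          exact mul_left_cancel this
        -- lengths
        have hlen_erase : (a'.eraseIdx k').length + 1 = a'.length :=
          List.length_eraseIdx_add_one hk'lt
        -- affine rep values
        obtain ⟨ε, c, hval, hb1, hb2⟩ :=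
          psi_bound cs hij h0 hra (a'.eraseIdx k')
            (fun y hy => hmem' y (List.mem_of_mem_eraseIdx hy))
        have hvc : psi cs hij h0 hra (π (a'.eraseIdx k')) 0 = c := by
          rw [hval 0]; ring
        have hchainval := psi_chain_val cs hij h0 hra (a' ++ [x]) hmem hch
        -- the head of a' ++ [x]
        have hne : a' ++ [x] ≠ [] := by simp
        obtain ⟨z, rest, hzrest⟩ := List.exists_cons_of_ne_nil hne
        have hzmem : z = i ∨ z = j := by
          apply hmem
          rw [hzrest]
          exact List.mem_cons_self
        have hlen_ax : (a' ++ [x]).length = a'.length + 1 := by simp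
        rcases hzmem with rfl | rfl
        · have hv1 := hchainval.1 (by rw [hzrest]; rfl)
          rw [hcancel, hvc] at hv1
          -- c = ((a'.length + 1 + 1) / 2 : ℕ), but 2c ≤ (a'.length - 1) + 1
          rw [hlen_ax] at hv1
          have : 2 * (((a'.length + 1 + 1) / 2 : ℕ) : ℤ) ≤ (a'.eraseIdx k').length + 1 := by
            rw [← hv1]; exact hb2
          have hnn : ((a'.length + 1 + 1) / 2 : ℕ) * 2 ≥ a'.length + 1 := by omega
          push_cast at this
          omega
        · have hv1 := hchainval.2 (by rw [hzrest]; rfl)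
          rw [hcancel, hvc] at hv1
          rw [hlen_ax] at hv1
          have : -(((a'.eraseIdx k').length : ℤ)) ≤ 2 * (-(((a'.length + 1) / 2 : ℕ) : ℤ)) := by
            rw [← hv1]; exact hb1
          have hnn : ((a'.length + 1) / 2 : ℕ) * 2 ≥ a'.length := by omega
          push_cast at this
          omega

/-- Two distinct right descents never have `M i j = 0`. -/
theorem not_both_descents (hra : ∀ i j : B, i ≠ j → M i j = 2 ∨ M i j = 0)
    {i j : B} (hij : i ≠ j) (h0 : M i j = 0) (u : W)
    (hdi : ℓ (u * cs.simple i) < ℓ u) (hdj : ℓ (u * cs.simple j) < ℓ u) : False := by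
  classical
  set S : Set ℕ := {m | ∃ ω : List B, (∀ x ∈ ω, x = i ∨ x = j) ∧ ℓ (u * π ω) = m} with hS
  have hne : S.Nonempty := ⟨ℓ u, [], by simp, by rw [cs.wordProd_nil, mul_one]⟩
  obtain ⟨ω₀, hmem₀, hlen₀⟩ := Nat.sInf_mem hne
  set v := u * π ω₀ with hv
  have hmin : ∀ ω : List B, (∀ x ∈ ω, x = i ∨ x = j) → ℓ v ≤ ℓ (v * π ω) := by
    intro ω hw
    have hmm : ℓ (v * π ω) ∈ S := by
      refine ⟨ω₀ ++ ω, ?_, ?_⟩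
      · intro y hy
        rcases List.mem_append.mp hy with h | h
        exacts [hmem₀ y h, hw y h]
      · rw [cs.wordProd_append, ← mul_assoc, ← hv]
    calc ℓ v = sInf S := hlen₀
      _ ≤ ℓ (v * π ω) := Nat.sInf_le hmm
  have hu : u = v * π (ω₀.reverse) := by
    rw [cs.wordProd_reverse, hv, mul_assoc, mul_inv_cancel, mul_one]
  set a := reduceWord (ω₀.reverse) with ha
  have hamem : ∀ y ∈ a, y = i ∨ y = j := fun y hy =>
    hmem₀ y (List.mem_reverse.mp (reduceWord_subset _ y hy))
  have hachain : List.Chain' (· ≠ ·) a := reduceWord_chain _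
  have hua : u = v * π a := by rw [hu, ha, reduceWord_prod]
  have hlu : ℓ u = ℓ v + a.length := by
    rw [hua]; exact chain_length cs hra hij h0 hmin a hamem hachain
  -- if a.concat x is a chain then x is not a descent
  have key : ∀ x : B, (x = i ∨ x = j) → ℓ (u * cs.simple x) < ℓ u →
      ∃ p ∈ a.getLast?, p = x := by
    intro x hx hdx
    by_contra hnc
    push_neg at hnc
    have hchx : List.Chain' (· ≠ ·) (a ++ [x]) := by
      rw [List.Chain', List.isChain_append]
      refine ⟨hachain, List.isChain_singleton x, ?_⟩
      intro p hp q hq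
      simp only [List.head?_cons, Option.mem_def, Option.some.injEq] at hq
      subst hq
      exact hnc p hp
    have hmemx : ∀ y ∈ a ++ [x], y = i ∨ y = j := by
      intro y hy
      rcases List.mem_append.mp hy with h | h
      · exact hamem y h
      · simp at h
        subst h
        exact hx
    have := chain_length cs hra hij h0 hmin (a ++ [x]) hmemx hchx
    rw [cs.wordProd_append, cs.wordProd_singleton, ← mul_assoc, ← hua] at this
    simp only [List.length_append, List.length_singleton] at this
    omega
  obtain ⟨p, hp, hpi⟩ := key i (Or.inl rfl) hdi
  obtain ⟨q, hq, hqj⟩ := key j (Or.inr rfl) hdj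
  rw [Option.mem_def] at hp hq
  have hpq : p = q := Option.some.inj (hp.symm.trans hq)
  exact hij (by rw [← hpi, ← hqj, hpq])

theorem central_mem (hra : ∀ i j : B, i ≠ j → M i j = 2 ∨ M i j = 0) (r : B) :
    ∀ (n : ℕ) (w : W), ℓ w = n → w * cs.simple r = cs.simple r * w →
    w ∈ Subgroup.closure
      (cs.simple '' {j : B | cs.simple j * cs.simple r = cs.simple r * cs.simple j}) := by
  intro n
  induction n using Nat.strong_induction_on with
  | _ n ih =>
    intro w hlen hcomm
    by_cases hw1 : w = 1
    · subst hw1; exact Subgroup.one_mem _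
    by_cases hA : ℓ (w * cs.simple r) < ℓ w
    · -- r is a right descent of w
      have hc' : (w * cs.simple r) * cs.simple r = cs.simple r * (w * cs.simple r) := by
        rw [cs.simple_mul_simple_cancel_right, ← mul_assoc, ← hcomm,
          cs.simple_mul_simple_cancel_right]
      have hlt : ℓ (w * cs.simple r) < n := hlen ▸ hA
      have hmem' := ih _ hlt (w * cs.simple r) rfl hc'
      have hw : w = (w * cs.simple r) * cs.simple r :=
        (cs.simple_mul_simple_cancel_right r).symm
      rw [hw]
      exact Subgroup.mul_mem _ hmem'
        (Subgroup.subset_closure ⟨r, rfl, rfl⟩)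
    · -- r is not a right descent of w
      push_neg at hA
      obtain ⟨jj, hdj⟩ := cs.exists_rightDescent_of_ne_one hw1
      have hdj' : ℓ (w * cs.simple jj) < ℓ w := hdj
      have hjr : jj ≠ r := by
        rintro rfl
        exact absurd hdj' (not_lt.mpr hA)
      have hu1 : (w * cs.simple r) * cs.simple r = w := cs.simple_mul_simple_cancel_right r
      have hulen : ℓ (w * cs.simple r) = ℓ w + 1 := by
        rcases cs.length_mul_simple w r with h | h
        · exact h
        · omega
      have hdru : ℓ ((w * cs.simple r) * cs.simple r) < ℓ (w * cs.simple r) := by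
        rw [hu1]; omega
      have hdju : ℓ ((w * cs.simple r) * cs.simple jj) < ℓ (w * cs.simple r) := by
        have h1 : (w * cs.simple r) * cs.simple jj = cs.simple r * (w * cs.simple jj) := by
          rw [hcomm, mul_assoc]
        rw [h1]
        rcases cs.length_simple_mul (w * cs.simple jj) r with h | h <;> omega
      rcases hra jj r hjr with h2 | h0
      · have hcjr : cs.simple jj * cs.simple r = cs.simple r * cs.simple jj :=
          comm_of_M_eq_two cs h2
        have hc' : (w * cs.simple jj) * cs.simple r = cs.simple r * (w * cs.simple jj) := by
          calc (w * cs.simple jj) * cs.simple r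
              = w * (cs.simple jj * cs.simple r) := mul_assoc _ _ _
            _ = w * (cs.simple r * cs.simple jj) := by rw [hcjr]
            _ = (w * cs.simple r) * cs.simple jj := (mul_assoc _ _ _).symm
            _ = (cs.simple r * w) * cs.simple jj := by rw [hcomm]
            _ = cs.simple r * (w * cs.simple jj) := mul_assoc _ _ _
        have hlt : ℓ (w * cs.simple jj) < n := by omega
        have hmem' := ih _ hlt (w * cs.simple jj) rfl hc'
        have hw : w = (w * cs.simple jj) * cs.simple jj :=
          (cs.simple_mul_simple_cancel_right jj).symm
        rw [hw]
        exact Subgroup.mul_mem _ hmem' (Subgroup.subset_closure ⟨jj, hcjr, rfl⟩)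
      · exact (not_both_descents cs hra hjr h0 (w * cs.simple r) hdju hdru).elim

end RAC

/-- In a right-angled Coxeter system, the centralizer of a standard generator `r` is the
special (standard parabolic) subgroup generated by the set `C(r)` of generators commuting
with `r`. -/
theorem right_angled_centralizer_of_generator
    {B W : Type*} [Group W] (M : CoxeterMatrix B) (cs : CoxeterSystem M W)
    (rightAngled : ∀ i j : B, i ≠ j → M i j = 2 ∨ M i j = 0) (r : B) :
    Subgroup.centralizer {cs.simple r} =
      Subgroup.closure
        (cs.simple '' {j : B | cs.simple j * cs.simple r = cs.simple r * cs.simple j}) := by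
  apply _root_.le_antisymm
  · intro w hw
    have hcomm : cs.simple r * w = w * cs.simple r :=
      Subgroup.mem_centralizer_iff.mp hw (cs.simple r) rfl
    exact RAC.central_mem cs rightAngled r (cs.length w) w rfl hcomm.symm
  · rw [Subgroup.closure_le]
    rintro g ⟨jj, hjj, rfl⟩
    rw [SetLike.mem_coe, Subgroup.mem_centralizer_iff]
    rintro x hx
    rw [Set.mem_singleton_iff] at hx
    subst hx
    exact hjj.symm
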